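/- For α, B ∈ ℍ and ᾶ any conjugate of α (i.e., ᾶ = qαq⁻¹ for some nonzero q), the absolute value |α + B + ᾶ| satisfies m ≤ |α + B + ᾶ| ≤ M, where M = √(Re(2α+B)² + (|Im(α+B)| + |Im(α)|)²) and m = √(Re(2α+B)² + (|Im(α+B)| − |Im(α)|)²). -/

import Mathlib

open Quaternion


lemma norm_eq_sqrt (z : ℍ[ℝ]) : ‖z‖ = Real.sqrt (z.re ^ 2 + ‖z.im‖ ^ 2) := by
  have h1 : ‖z‖ ^ 2 = normSq z := by rw [sq, ← normSq_eq_norm_mul_self]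
  have h2 : ‖z.im‖ ^ 2 = normSq z.im := by rw [sq, ← normSq_eq_norm_mul_self]
  have : z.re ^ 2 + ‖z.im‖ ^ 2 = ‖z‖ ^ 2 := by
    rw [h1, h2, normSq_def', normSq_def']; simp; ring
  rw [this, Real.sqrt_sq (norm_nonneg z)]

lemma re_conj (α q : ℍ[ℝ]) (hq : q ≠ 0) : (q * α * q⁻¹).re = α.re := by
  have comm : ∀ a b : ℍ[ℝ], (a * b).re = (b * a).re := by
    intro a b; rw [re_mul, re_mul]; ring
  rw [comm, ← mul_assoc, inv_mul_cancel₀ hq, one_mul]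

lemma nim_conj (α q : ℍ[ℝ]) (hq : q ≠ 0) : ‖(q * α * q⁻¹).im‖ = ‖α.im‖ := by
  have hn : ‖q * α * q⁻¹‖ = ‖α‖ := by
    rw [norm_mul, norm_mul, norm_inv, mul_comm, ← mul_assoc,
      inv_mul_cancel₀ (norm_ne_zero_iff.mpr hq), one_mul]
  have h1 := norm_eq_sqrt (q * α * q⁻¹)
  have h2 := norm_eq_sqrt α
  rw [hn, h2, re_conj α q hq] at h1
  have h4 := (Real.sqrt_inj (by positivity) (by positivity)).mp h1
  have h3 : ‖(q * α * q⁻¹).im‖ ^ 2 = ‖α.im‖ ^ 2 := by linarith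
  nlinarith [norm_nonneg (q * α * q⁻¹).im, norm_nonneg α.im]

theorem conjugate_sum_norm_bounds (α B q : ℍ[ℝ]) (hq : q ≠ 0) :
    Real.sqrt (((2 * α + B).re) ^ 2 + (‖(α + B).im‖ - ‖α.im‖) ^ 2)
        ≤ ‖α + B + q * α * q⁻¹‖ ∧
      ‖α + B + q * α * q⁻¹‖
        ≤ Real.sqrt (((2 * α + B).re) ^ 2 + (‖(α + B).im‖ + ‖α.im‖) ^ 2) := by
  set y := q * α * q⁻¹ with hy
  have hre : (α + B + y).re = (2 * α + B).re := by
    simp [hy, re_conj α q hq, two_mul]; ring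
  have him : (α + B + y).im = (α + B).im + y.im := by simp
  have hn : ‖y.im‖ = ‖α.im‖ := nim_conj α q hq
  rw [norm_eq_sqrt (α + B + y), hre, him]
  have tri : ‖(α + B).im + y.im‖ ≤ ‖(α + B).im‖ + ‖y.im‖ := norm_add_le _ _
  have tri2 : |‖(α + B).im‖ - ‖y.im‖| ≤ ‖(α + B).im + y.im‖ := by
    simpa using abs_norm_sub_norm_le (α + B).im (-y.im)
  have h0 := norm_nonneg ((α + B).im + y.im)
  rw [← hn]
  constructor
  · apply Real.sqrt_le_sqrt
    nlinarith [abs_nonneg (‖(α + B).im‖ - ‖y.im‖), sq_abs (‖(α + B).im‖ - ‖y.im‖)]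
  · apply Real.sqrt_le_sqrt
    nlinarith [norm_nonneg (α + B).im, norm_nonneg y.im]
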